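/- There is a constant c > 0 with the following property: for all integers m, t, Δ ≥ 1 and every abstract network 𝓘 : Fin m → Finset ℕ whose graph G(𝓘) is connected, has treewidth at most t, and has maximum degree at most Δ, there exists a contraction tree (T, ι) for 𝓘 of rank at most c·Δ·t and of height at most c·Δ·t·(1 + log m). -/

import Mathlib

/-- A multigraph: a map assigning to each edge an unordered pair of two
distinct vertices (loops forbidden, parallel edges allowed). -/
structure Multigraph (V E : Type) where
  ends : E → Sym2 V
  no_loops : ∀ e : E, ¬ (ends e).IsDiag

namespace Multigraph

variable {V E : Type}

/-- Two vertices are adjacent if some edge has them as its endpoints. -/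
def Adj (G : Multigraph V E) (a b : V) : Prop :=
  a ≠ b ∧ ∃ e : E, a ∈ G.ends e ∧ b ∈ G.ends e

/-- A multigraph is connected if every two vertices are joined by a finite
sequence of adjacencies. -/
def Connected (G : Multigraph V E) : Prop :=
  Nonempty V ∧ ∀ a b : V, Relation.ReflTransGen G.Adj a b

/-- The number of edges with one endpoint in `S` and the other outside `S`. -/
noncomputable def cutCount (G : Multigraph V E) (S : Set V) : ℕ :=
  Nat.card {e : E // (∃ a ∈ G.ends e, a ∈ S) ∧ (∃ a ∈ G.ends e, a ∉ S)}

/-- The degree of a vertex: the number of edge-endpoint incidences at `v`. -/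
noncomputable def degree (G : Multigraph V E) (v : V) : ℕ :=
  Nat.card {e : E // v ∈ G.ends e}

end Multigraph

/-- Rooted binary trees in which every internal node has exactly two children,
with leaves labeled by elements of `α`. -/
inductive BTree (α : Type) : Type
  | leaf (a : α) : BTree α
  | node (l r : BTree α) : BTree α

namespace BTree

variable {α : Type}

/-- The list of leaf labels of a binary tree. -/
def leaves : BTree α → List α
  | leaf a => [a]
  | node l r => l.leaves ++ r.leaves

/-- The set of leaf labels of a binary tree (for a node `u` of a carving
decomposition, this is `V[u]`). -/
def leafSet (T : BTree α) : Set α := {a | a ∈ T.leaves}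

/-- The height of a binary tree: maximum number of edges on a root-to-leaf path. -/
def height : BTree α → ℕ
  | leaf _ => 0
  | node l r => max l.height r.height + 1

/-- The list of all subtrees (i.e. nodes) of a binary tree. -/
def subtrees : BTree α → List (BTree α)
  | leaf a => [leaf a]
  | node l r => node l r :: (l.subtrees ++ r.subtrees)

end BTree

/-- A rooted carving decomposition of a multigraph `G` on vertex type `V`:
a rooted binary tree whose leaves are labeled bijectively with the vertices. -/
def IsCarvingDecomp {V E : Type} (_G : Multigraph V E) (T : BTree V) : Prop :=
  T.leaves.Nodup ∧ ∀ v : V, v ∈ T.leaves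

/-- The carving decomposition `T` of `G` has width at most `w`:
for every node `u`, `|E(V[u], V∖V[u])| ≤ w`. -/
def CarvWidthLE {V E : Type} (G : Multigraph V E) (T : BTree V) (w : ℕ) : Prop :=
  ∀ u ∈ T.subtrees, G.cutCount u.leafSet ≤ w

/-- A carving decomposition is contractive if for every internal node `u`
there is an edge with one endpoint in `V[u.l]` and the other in `V[u.r]`. -/
def Contractive {V E : Type} (G : Multigraph V E) (T : BTree V) : Prop :=
  ∀ l r : BTree V, BTree.node l r ∈ T.subtrees →
    ∃ e : E, (∃ a ∈ G.ends e, a ∈ l.leafSet) ∧ (∃ a ∈ G.ends e, a ∈ r.leafSet)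

/-- An abstract network: every index occurring in the family belongs to exactly
two members of the family. -/
def IsAbstractNetwork {m : ℕ} (I : Fin m → Finset ℕ) : Prop :=
  ∀ i : ℕ, (∃ j : Fin m, i ∈ I j) →
    (Finset.univ.filter fun j : Fin m => i ∈ I j).card = 2

/-- `G` (with edge-to-index labeling `idx`) is the graph of the abstract network `I`:
edges correspond bijectively to the indices occurring in the family, and the edge with
index `i` joins exactly the two vertices `j` with `i ∈ I j`. -/
def IsNetworkGraph {m : ℕ} {E : Type} (I : Fin m → Finset ℕ)
    (G : Multigraph (Fin m) E) (idx : E → ℕ) : Prop :=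
  Function.Injective idx ∧
  (∀ i : ℕ, (∃ j : Fin m, i ∈ I j) → ∃ e : E, idx e = i) ∧
  (∀ e : E, ∀ j : Fin m, j ∈ G.ends e ↔ idx e ∈ I j)

/-- `G` has a tree decomposition of width at most `t`: a finite tree together with
bags covering all vertices, covering both endpoints of every edge, and such that
the nodes containing any fixed vertex induce a connected subtree; all bags have
size at most `t + 1`. -/
def TreewidthLE {V E : Type} (G : Multigraph V E) (t : ℕ) : Prop :=
  ∃ (N : Type) (_ : Fintype N) (tr : SimpleGraph N) (bag : N → Set V),
    tr.IsTree ∧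
    (∀ v : V, ∃ n : N, v ∈ bag n) ∧
    (∀ e : E, ∃ n : N, ∀ a ∈ G.ends e, a ∈ bag n) ∧
    (∀ v : V, (tr.induce {n : N | v ∈ bag n}).Connected) ∧
    (∀ n : N, (bag n).ncard ≤ t + 1)

/-- The index set `ι(u)` attached to the node `u` of a contraction tree for `I`:
the index set of the family at leaves, and the symmetric difference of the
children's index sets at internal nodes. -/
def iota {m : ℕ} (I : Fin m → Finset ℕ) : BTree (Fin m) → Finset ℕ
  | .leaf j => I j
  | .node l r => symmDiff (iota I l) (iota I r)

/-- `(T, ι)` is a contraction tree for the abstract network `I`: the leaves of `T` are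
labeled bijectively with the members of the family, and at every internal node the
index sets of the two children intersect (so that they can be contracted). -/
def IsContractionTree {m : ℕ} (I : Fin m → Finset ℕ) (T : BTree (Fin m)) : Prop :=
  T.leaves.Nodup ∧ (∀ j : Fin m, j ∈ T.leaves) ∧
  ∀ l r : BTree (Fin m), BTree.node l r ∈ T.subtrees →
    ((iota I l) ∩ (iota I r)).Nonempty

/- ### Part A : index-set combinatorics -/
noncomputable section CTAux
open Classical

namespace CT

variable {m : ℕ} (I : Fin m → Finset ℕ)

/-- all indices occurring in the family -/
def allIdx : Finset ℕ := Finset.univ.biUnion I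

/-- number of members of `S` containing index `i` -/
def cnt (S : Finset (Fin m)) (i : ℕ) : ℕ := (S.filter fun j => i ∈ I j).card

/-- boundary indices of `S` : those belonging to exactly one member of `S` -/
def bd (S : Finset (Fin m)) : Finset ℕ := (allIdx I).filter fun i => cnt I S i = 1

lemma mem_allIdx {i : ℕ} : i ∈ allIdx I ↔ ∃ j, i ∈ I j := by
  simp [allIdx]

lemma cnt_le_of_subset {S S' : Finset (Fin m)} (h : S ⊆ S') (i : ℕ) :
    cnt I S i ≤ cnt I S' i :=
  Finset.card_le_card (Finset.filter_subset_filter _ h)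

lemma cnt_union {S S' : Finset (Fin m)} (h : Disjoint S S') (i : ℕ) :
    cnt I (S ∪ S') i = cnt I S i + cnt I S' i := by
  rw [cnt, Finset.filter_union, Finset.card_union_of_disjoint, cnt, cnt]
  exact Finset.disjoint_filter_filter h

lemma exists_mem_of_cnt_eq_one {S : Finset (Fin m)} {i : ℕ} (h : cnt I S i = 1) :
    ∃ j ∈ S, i ∈ I j := by
  obtain ⟨j, hj⟩ := Finset.card_eq_one.1 h
  refine ⟨j, ?_, ?_⟩ <;>
  · have : j ∈ S.filter fun j => i ∈ I j := hj ▸ Finset.mem_singleton_self j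
    simp only [Finset.mem_filter] at this
    tauto

/-- the two endpoints of an occurring index -/
lemma two_fibers (hnet : IsAbstractNetwork I) {i : ℕ} {j : Fin m} (hij : i ∈ I j) :
    ∃ k, k ≠ j ∧ i ∈ I k ∧ ∀ x, i ∈ I x → x = j ∨ x = k := by
  have h2 := hnet i ⟨j, hij⟩
  obtain ⟨a, b, hab, hset⟩ := Finset.card_eq_two.1 h2
  have hj : j ∈ ({a, b} : Finset (Fin m)) := by
    rw [← hset]; simp [hij]
  have hmem : ∀ x, i ∈ I x → x = a ∨ x = b := by
    intro x hx
    have : x ∈ ({a, b} : Finset (Fin m)) := by rw [← hset]; simp [hx]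
    simpa using this
  have hia : i ∈ I a := by
    have : a ∈ ({a, b} : Finset (Fin m)) := by simp
    rw [← hset] at this
    exact (Finset.mem_filter.1 this).2
  have hib : i ∈ I b := by
    have : b ∈ ({a, b} : Finset (Fin m)) := by simp
    rw [← hset] at this
    exact (Finset.mem_filter.1 this).2
  rcases Finset.mem_insert.1 hj with h | h
  · subst h
    exact ⟨b, hab.symm, hib, hmem⟩
  · have h' : j = b := by simpa using h
    subst h'
    exact ⟨a, hab, hia, fun x hx => (hmem x hx).symm⟩

lemma cnt_univ (hnet : IsAbstractNetwork I) {i : ℕ} (h : i ∈ allIdx I) :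
    cnt I Finset.univ i = 2 := hnet i ((mem_allIdx I).1 h)

lemma bd_singleton (j : Fin m) : bd I {j} = I j := by
  ext i
  rw [bd, Finset.mem_filter, mem_allIdx]; simp only [cnt]
  constructor
  · rintro ⟨-, h⟩
    obtain ⟨k, hk, hik⟩ := exists_mem_of_cnt_eq_one I h
    simpa [Finset.mem_singleton.1 hk] using hik
  · intro h
    refine ⟨⟨j, h⟩, ?_⟩
    rw [Finset.filter_singleton, if_pos h, Finset.card_singleton]

lemma bd_union (hnet : IsAbstractNetwork I) {S S' : Finset (Fin m)} (h : Disjoint S S') :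
    bd I (S ∪ S') = symmDiff (bd I S) (bd I S') := by
  ext i
  by_cases hi : i ∈ allIdx I
  · have htot : cnt I S i + cnt I S' i ≤ 2 := by
      rw [← cnt_union I h]
      rw [← cnt_univ I hnet hi]
      exact cnt_le_of_subset I (Finset.subset_univ _) i
    simp only [Finset.mem_symmDiff, bd, Finset.mem_filter, cnt_union I h, hi, true_and]
    omega
  · have hS : i ∉ bd I S := fun hc => hi (Finset.mem_filter.1 hc).1
    have hS' : i ∉ bd I S' := fun hc => hi (Finset.mem_filter.1 hc).1
    simp only [Finset.mem_symmDiff, bd, Finset.mem_filter, hi, false_and, false_iff]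
    tauto

/-- `iota` is the boundary of the leaf set -/
lemma iota_eq_bd (hnet : IsAbstractNetwork I) :
    ∀ T : BTree (Fin m), T.leaves.Nodup → iota I T = bd I T.leaves.toFinset
  | BTree.leaf j, _ => by
    simp only [iota, BTree.leaves, List.toFinset_cons, List.toFinset_nil,
      Finset.insert_empty, bd_singleton]
  | BTree.node l r, hnd => by
    have h := List.nodup_append.1 (by simpa [BTree.leaves] using hnd)
    have hdisj : Disjoint l.leaves.toFinset r.leaves.toFinset := by
      rw [Finset.disjoint_left]
      intro a ha hb
      exact h.2.2 _ (List.mem_toFinset.1 ha) _ (List.mem_toFinset.1 hb) rfl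
    rw [iota, iota_eq_bd hnet l h.1, iota_eq_bd hnet r h.2.1]
    rw [show (BTree.node l r).leaves.toFinset = l.leaves.toFinset ∪ r.leaves.toFinset by
      simp [BTree.leaves]]
    exact (bd_union I hnet hdisj).symm

/-- incidence set of a vertex set -/
def inc (X : Finset (Fin m)) : Finset ℕ := X.biUnion I

lemma card_inc_le {Δ : ℕ} (hdeg : ∀ j, (I j).card ≤ Δ) (X : Finset (Fin m)) :
    (inc I X).card ≤ Δ * X.card := by
  calc (inc I X).card ≤ ∑ j ∈ X, (I j).card := Finset.card_biUnion_le
    _ ≤ ∑ _j ∈ X, Δ := Finset.sum_le_sum fun j _ => hdeg j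
    _ = Δ * X.card := by rw [Finset.sum_const, smul_eq_mul, mul_comm]

lemma bd_card_le {Δ : ℕ} (hdeg : ∀ j, (I j).card ≤ Δ) {S : Finset (Fin m)}
    {X : Finset (Fin m)} (h : ∀ i, i ∈ allIdx I → cnt I S i = 1 → ∃ k ∈ X, i ∈ I k) :
    (bd I S).card ≤ Δ * X.card := by
  refine le_trans (Finset.card_le_card ?_) (card_inc_le I hdeg X)
  intro i hi
  rw [bd, Finset.mem_filter] at hi
  obtain ⟨k, hk, hik⟩ := h i hi.1 hi.2
  exact Finset.mem_biUnion.2 ⟨k, hk, hik⟩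

end CT
end CTAux
/- ### Part B : BTree lemmas -/
namespace BTree

variable {α : Type}

lemma self_mem_subtrees : ∀ T : BTree α, T ∈ T.subtrees
  | leaf a => by simp [subtrees]
  | node l r => by simp [subtrees]

lemma mem_subtrees_node {u l r : BTree α} :
    u ∈ (node l r).subtrees ↔ u = node l r ∨ u ∈ l.subtrees ∨ u ∈ r.subtrees := by
  simp [subtrees]

lemma leaves_sublist : ∀ T : BTree α, ∀ u ∈ T.subtrees, u.leaves.Sublist T.leaves
  | leaf a, u, hu => by
    simp only [subtrees, List.mem_singleton] at hu
    subst hu; exact List.Sublist.refl _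
  | node l r, u, hu => by
    rcases mem_subtrees_node.1 hu with h | h | h
    · subst h; exact List.Sublist.refl _
    · exact (leaves_sublist l u h).trans (by simp [leaves])
    · exact (leaves_sublist r u h).trans (by simp [leaves])

lemma nodup_of_subtree {T u : BTree α} (hT : T.leaves.Nodup) (hu : u ∈ T.subtrees) :
    u.leaves.Nodup := (leaves_sublist T u hu).nodup hT

lemma height_node (l r : BTree α) : (node l r).height = max l.height r.height + 1 := rfl

lemma leaves_ne_nil : ∀ T : BTree α, T.leaves ≠ []
  | leaf a => by simp [leaves]
  | node l r => by simp [leaves, leaves_ne_nil l]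

end BTree
/- ### Part C : machinery on trees (SimpleGraph) -/
noncomputable section CTTree
open Classical
namespace CT
open SimpleGraph

variable {N : Type} {tr : SimpleGraph N}

/-- reachability in `tr` avoiding the node `μ` -/
def SOn (tr : SimpleGraph N) (μ a b : N) : Prop := ∃ w : tr.Walk a b, μ ∉ w.support

lemma SOn.ne_left {μ a b : N} (h : SOn tr μ a b) : a ≠ μ := by
  obtain ⟨w, hw⟩ := h
  exact fun hc => hw (hc ▸ w.start_mem_support)

lemma SOn.ne_right {μ a b : N} (h : SOn tr μ a b) : b ≠ μ := by
  obtain ⟨w, hw⟩ := h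
  exact fun hc => hw (hc ▸ w.end_mem_support)

lemma SOn.rfl {μ a : N} (h : a ≠ μ) : SOn tr μ a a :=
  ⟨Walk.nil, by simp [Ne.symm h]⟩

lemma SOn.symm {μ a b : N} (h : SOn tr μ a b) : SOn tr μ b a := by
  obtain ⟨w, hw⟩ := h
  exact ⟨w.reverse, by simpa [Walk.support_reverse] using hw⟩

lemma SOn.trans {μ a b c : N} (h : SOn tr μ a b) (h' : SOn tr μ b c) : SOn tr μ a c := by
  obtain ⟨w, hw⟩ := h
  obtain ⟨w', hw'⟩ := h'
  exact ⟨w.append w', by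
    rw [Walk.mem_support_append_iff]
    tauto⟩

/-- in a tree, a vertex on some path between `a` and `b` lies on every walk
between `a` and `b`. -/
lemma mem_of_isPath_mem (htr : tr.IsTree) {a b x : N} {p : tr.Walk a b}
    (hp : p.IsPath) (hx : x ∈ p.support) (w : tr.Walk a b) : x ∈ w.support := by
  haveI := Classical.decEq N
  have he : p = w.bypass := (htr.existsUnique_path a b).unique hp w.bypass_isPath
  exact w.support_bypass_subset (he ▸ hx)

lemma not_SOn_of_isPath_mem (htr : tr.IsTree) {a b x : N} {p : tr.Walk a b}
    (hp : p.IsPath) (hx : x ∈ p.support) : ¬ SOn tr x a b := by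
  rintro ⟨w, hw⟩
  exact hw (mem_of_isPath_mem htr hp hx w)

/-- the two sides of an edge of a tree are disjoint -/
lemma side_disjoint (htr : tr.IsTree) {a b x : N} (hab : tr.Adj a b)
    (h1 : SOn tr b x a) (h2 : SOn tr a x b) : False := by
  haveI := Classical.decEq N
  obtain ⟨w1, hw1⟩ := h1
  obtain ⟨w2, hw2⟩ := h2
  set q1 := w1.bypass with hq1
  have hq1path : q1.IsPath := w1.bypass_isPath
  have hbq1 : b ∉ q1.support := fun hc => hw1 (w1.support_bypass_subset hc)
  have hp' : (q1.concat hab).IsPath := by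
    rw [← Walk.isPath_reverse_iff, Walk.reverse_concat, Walk.cons_isPath_iff]
    refine ⟨(Walk.isPath_reverse_iff _).2 hq1path, ?_⟩
    rw [Walk.support_reverse, List.mem_reverse]
    exact hbq1
  have hxa : a ∈ (q1.concat hab).support := by
    rw [Walk.support_concat, List.mem_append]
    exact Or.inl q1.end_mem_support
  exact hw2 (mem_of_isPath_mem htr hp' hxa w2)

/-- first-hit lemma : a walk ending in `S` has an initial segment meeting `S`
exactly once, at its end. -/
lemma first_hit {a b : N} (w : tr.Walk a b) (S : Set N) (hb : b ∈ S) :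
    ∃ u, u ∈ S ∧ ∃ w1 : tr.Walk a u,
      (∀ x ∈ w1.support, x ∈ S → x = u) ∧ (∀ x ∈ w1.support, x ∈ w.support) := by
  induction w with
  | nil =>
    exact ⟨_, hb, Walk.nil, by simp, by simp⟩
  | @cons a c b h p ih =>
    by_cases ha : a ∈ S
    · exact ⟨a, ha, Walk.nil, by simp, by simp⟩
    · obtain ⟨u, hu, w1, honly, hsub⟩ := ih hb
      refine ⟨u, hu, Walk.cons h w1, ?_, ?_⟩
      · intro x hx hxS
        rw [Walk.support_cons, List.mem_cons] at hx
        rcases hx with rfl | hx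
        · exact absurd hxS ha
        · exact honly x hx hxS
      · intro x hx
        rw [Walk.support_cons, List.mem_cons] at hx ⊢
        rcases hx with rfl | hx
        · exact Or.inl rfl
        · exact Or.inr (hsub x hx)

/-- median of three nodes in a tree -/
lemma median (htr : tr.IsTree) (n₁ n₂ n₃ : N) :
    ∃ μ : N, ¬ SOn tr μ n₁ n₂ ∧ ¬ SOn tr μ n₁ n₃ ∧ ¬ SOn tr μ n₂ n₃ := by
  haveI := Classical.decEq N
  obtain ⟨w12⟩ := htr.isConnected n₁ n₂
  obtain ⟨w13⟩ := htr.isConnected n₁ n₃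
  set p12 := w12.bypass with hp12def
  set p13 := w13.bypass with hp13def
  have h12 : p12.IsPath := w12.bypass_isPath
  have h13 : p13.IsPath := w13.bypass_isPath
  obtain ⟨u, hu, w1, honly, hsub⟩ :=
    first_hit (tr := tr) p12.reverse {x | x ∈ p13.support} p13.start_mem_support
  have hu' : u ∈ p13.support := hu
  set w1' := w1.bypass with hw1'def
  have hw1'path : w1'.IsPath := w1.bypass_isPath
  have hw1'sub : ∀ x ∈ w1'.support, x ∈ w1.support := fun x hx => w1.support_bypass_subset hx
  set q := w1'.append (p13.dropUntil u hu') with hqdef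
  have hdrop : (p13.dropUntil u hu').IsPath := h13.dropUntil hu'
  have hq : q.IsPath := by
    rw [Walk.isPath_def, hqdef, Walk.support_append, List.nodup_append]
    refine ⟨(Walk.isPath_def _).1 hw1'path, ?_, ?_⟩
    · exact ((Walk.isPath_def _).1 hdrop).tail
    · intro x hx _ hx' rfl
      have hxp13 : x ∈ p13.support :=
        p13.support_dropUntil_subset hu' (List.mem_of_mem_tail hx')
      have hxu : x = u := honly x (hw1'sub x hx) hxp13
      subst hxu
      have : (p13.dropUntil x hu').support = x :: (p13.dropUntil x hu').support.tail :=
        Walk.support_eq_cons _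
      have hnd := (Walk.isPath_def _).1 hdrop
      rw [this] at hnd
      exact (List.nodup_cons.1 hnd).1 hx'
  have hup12 : u ∈ p12.support := by
    have : u ∈ p12.reverse.support := hsub u w1.end_mem_support
    rwa [Walk.support_reverse, List.mem_reverse] at this
  have huq : u ∈ q.support := by
    rw [hqdef, Walk.mem_support_append_iff]
    exact Or.inl w1'.end_mem_support
  exact ⟨u, not_SOn_of_isPath_mem htr h12 hup12,
    not_SOn_of_isPath_mem htr h13 hu',
    not_SOn_of_isPath_mem htr hq huq⟩

end CT
end CTTree
/- ### Part C2 : centroid of a tree w.r.t. a weighting -/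
noncomputable section CTCentroid
open Classical
namespace CT
open SimpleGraph

variable {N : Type} {tr : SimpleGraph N}

/-- weight of the component of `tr − μ` containing `x` -/
def wgtOn (tr : SimpleGraph N) {α : Type} (ν : α → N) (W : Finset α) (μ x : N) : ℕ :=
  (W.filter fun v => SOn tr μ (ν v) x).card

lemma wgtOn_mono {α : Type} (ν : α → N) (W : Finset α) {μ x b : N}
    (h : SOn tr μ x b) : wgtOn tr ν W μ x ≤ wgtOn tr ν W μ b := by
  apply Finset.card_le_card
  intro v hv
  have hv' := Finset.mem_filter.1 hv
  exact Finset.mem_filter.2 ⟨hv'.1, hv'.2.trans h⟩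

lemma wgtOn_disj (htr : tr.IsTree) {α : Type} (ν : α → N) (W : Finset α) {a b : N}
    (hadj : tr.Adj a b) : wgtOn tr ν W b a + wgtOn tr ν W a b ≤ W.card := by
  have hd : Disjoint (W.filter fun v => SOn tr b (ν v) a)
      (W.filter fun v => SOn tr a (ν v) b) := by
    rw [Finset.disjoint_left]
    intro v hv hv'
    exact side_disjoint htr hadj (Finset.mem_filter.1 hv).2 (Finset.mem_filter.1 hv').2
  calc wgtOn tr ν W b a + wgtOn tr ν W a b
      = ((W.filter fun v => SOn tr b (ν v) a) ∪ (W.filter fun v => SOn tr a (ν v) b)).card :=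
        (Finset.card_union_of_disjoint hd).symm
    _ ≤ W.card := Finset.card_le_card (Finset.union_subset
        (Finset.filter_subset _ _) (Finset.filter_subset _ _))

lemma centroid [Fintype N] (htr : tr.IsTree) {α : Type} (W : Finset α) (ν : α → N)
    (hW : W.Nonempty) :
    ∃ μ : N, ∀ x : N, 2 * wgtOn tr ν W μ x ≤ W.card := by
  classical
  have hWc1 : 1 ≤ W.card := Finset.card_pos.2 hW
  by_contra hcon
  push_neg at hcon
  -- every node has a heavy neighbour
  have hH : ∀ μ : N, ∃ b, tr.Adj μ b ∧ W.card < 2 * wgtOn tr ν W μ b := by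
    intro μ
    obtain ⟨x, hx⟩ := hcon μ
    have hpos : 0 < wgtOn tr ν W μ x := by omega
    obtain ⟨v, hv⟩ := Finset.card_pos.1 hpos
    have hv' := Finset.mem_filter.1 hv
    have hxμ : x ≠ μ := hv'.2.ne_right
    obtain ⟨wμx⟩ := htr.isConnected μ x
    obtain ⟨b, hadj, p', hpeq⟩ := Walk.exists_eq_cons_of_ne (Ne.symm hxμ) wμx.bypass
    have hbp : wμx.bypass.IsPath := wμx.bypass_isPath
    rw [hpeq, Walk.cons_isPath_iff] at hbp
    have hSxb : SOn tr μ x b := by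
      refine ⟨p'.reverse, ?_⟩
      rw [Walk.support_reverse, List.mem_reverse]
      exact hbp.2
    have hmono := wgtOn_mono (tr := tr) ν W hSxb
    exact ⟨b, hadj, by omega⟩
  choose H hH1 hH2 using hH
  have hne : Nonempty N := htr.isConnected.nonempty
  set f : ℕ → N := fun k => H^[k] (Classical.arbitrary N) with hfdef
  have hf : ∀ k, f (k + 1) = H (f k) :=
    fun k => Function.iterate_succ_apply' H k (Classical.arbitrary N)
  have hab : ∀ k, tr.Adj (f k) (f (k + 1)) := fun k => (hf k) ▸ hH1 (f k)
  have heavy : ∀ k, W.card < 2 * wgtOn tr ν W (f k) (f (k + 1)) :=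
    fun k => (hf k) ▸ hH2 (f k)
  -- side sets grow strictly along the heavy sequence
  have incl : ∀ k y, SOn tr (f (k + 1)) y (f k) → SOn tr (f (k + 2)) y (f (k + 1)) := by
    intro k y hy
    obtain ⟨w, hbw⟩ := hy
    have hcb : f (k + 2) ≠ f (k + 1) := by
      have := (hab (k + 1)).ne'
      rwa [show k + 1 + 1 = k + 2 from rfl] at this
    have hcw : f (k + 2) ∉ w.support := by
      intro hc
      have hS : SOn tr (f (k + 1)) (f (k + 2)) (f k) :=
        ⟨w.dropUntil _ hc, fun hx => hbw (w.support_dropUntil_subset hc hx)⟩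
      have hmono := wgtOn_mono (tr := tr) ν W hS
      have h1 := heavy (k + 1)
      rw [show k + 1 + 1 = k + 2 from rfl] at h1
      have h2 := heavy k
      have h3 := wgtOn_disj htr ν W (hab k)
      omega
    refine ⟨w.concat ((hab k).symm).symm, ?_⟩
    rw [Walk.support_concat, List.mem_append]
    rintro (hc | hc)
    · exact hcw hc
    · rw [List.mem_singleton] at hc
      exact hcb hc
  have hmono2 : ∀ k, wgtOn tr (id : N → N) Finset.univ (f (k + 1)) (f k) + 1 ≤
      wgtOn tr (id : N → N) Finset.univ (f (k + 2)) (f (k + 1)) := by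
    intro k
    have hnotmem : f (k + 1) ∉ Finset.univ.filter fun y => SOn tr (f (k + 1)) (id y) (f k) := by
      intro hc
      exact absurd rfl (Finset.mem_filter.1 hc).2.ne_left
    have hsub : insert (f (k + 1)) (Finset.univ.filter fun y => SOn tr (f (k + 1)) (id y) (f k))
        ⊆ Finset.univ.filter fun y => SOn tr (f (k + 2)) (id y) (f (k + 1)) := by
      intro y hy
      rcases Finset.mem_insert.1 hy with rfl | hy
      · refine Finset.mem_filter.2 ⟨Finset.mem_univ _, SOn.rfl ?_⟩
        have := (hab (k + 1)).ne
        rwa [show k + 1 + 1 = k + 2 from rfl] at this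
      · exact Finset.mem_filter.2 ⟨Finset.mem_univ _, incl k y (Finset.mem_filter.1 hy).2⟩
    have hc := Finset.card_le_card hsub
    rw [Finset.card_insert_of_notMem hnotmem] at hc
    exact hc
  have hge : ∀ k, k + 1 ≤ wgtOn tr (id : N → N) Finset.univ (f (k + 1)) (f k) := by
    intro k
    induction k with
    | zero =>
      have h0 : f 0 ∈ Finset.univ.filter fun y => SOn tr (f 1) (id y) (f 0) :=
        Finset.mem_filter.2 ⟨Finset.mem_univ _, SOn.rfl (hab 0).ne⟩
      have := Finset.card_pos.2 ⟨_, h0⟩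
      exact this
    | succ k ih =>
      have := hmono2 k
      rw [show k + 1 + 1 = k + 2 from rfl]
      omega
  have hle : wgtOn tr (id : N → N) Finset.univ (f (Fintype.card N + 1)) (f (Fintype.card N))
      ≤ Fintype.card N := by
    calc wgtOn tr (id : N → N) Finset.univ (f (Fintype.card N + 1)) (f (Fintype.card N))
        ≤ Finset.univ.card := Finset.card_filter_le _ _
      _ = Fintype.card N := Finset.card_univ
  have := hge (Fintype.card N)
  omega

end CT
end CTCentroid
/- ### Part D1 : graph side components and setup -/
noncomputable section CTD1
open Classical
namespace CT
open SimpleGraph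

variable {m t Δ : ℕ} {I : Fin m → Finset ℕ} {N : Type} {tr : SimpleGraph N}
  {bag : N → Set (Fin m)} {ν : Fin m → N}

/-- adjacency of the network graph, in terms of the family -/
def adjI (I : Fin m → Finset ℕ) (j k : Fin m) : Prop :=
  j ≠ k ∧ ∃ i, i ∈ I j ∧ i ∈ I k

lemma adjI.symm {j k : Fin m} (h : adjI I j k) : adjI I k j :=
  ⟨h.1.symm, h.2.imp fun _ hi => hi.symm⟩

/-- adjacency restricted to a vertex set -/
def relOn (I : Fin m → Finset ℕ) (U : Finset (Fin m)) (a b : Fin m) : Prop :=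
  adjI I a b ∧ a ∈ U ∧ b ∈ U

/-- connectivity within a vertex set -/
def reach (I : Fin m → Finset ℕ) (U : Finset (Fin m)) : Fin m → Fin m → Prop :=
  Relation.ReflTransGen (relOn I U)

lemma reach_symm {U : Finset (Fin m)} {a b : Fin m} (h : reach I U a b) : reach I U b a := by
  have hsym : Symmetric (relOn I U) := fun x y hxy => ⟨hxy.1.symm, hxy.2.2, hxy.2.1⟩
  haveI : Std.Symm (relOn I U) := ⟨hsym⟩
  exact Std.Symm.symm (r := Relation.ReflTransGen (relOn I U)) a b h

lemma reach_mono {U U' : Finset (Fin m)} (hU : U ⊆ U') {a b : Fin m} (h : reach I U a b) :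
    reach I U' a b :=
  Relation.ReflTransGen.mono (fun x y hxy => ⟨hxy.1, hU hxy.2.1, hU hxy.2.2⟩) _ _ h

def ConnOn (I : Fin m → Finset ℕ) (U : Finset (Fin m)) : Prop :=
  ∀ a ∈ U, ∀ b ∈ U, reach I U a b

/-- the connected component of `v` inside `U` -/
def comp (I : Fin m → Finset ℕ) (U : Finset (Fin m)) (v : Fin m) : Finset (Fin m) :=
  U.filter (reach I U v)

lemma comp_subset {U : Finset (Fin m)} {v : Fin m} : comp I U v ⊆ U :=
  Finset.filter_subset _ _

lemma mem_comp_self {U : Finset (Fin m)} {v : Fin m} (hv : v ∈ U) : v ∈ comp I U v :=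
  Finset.mem_filter.2 ⟨hv, Relation.ReflTransGen.refl⟩

lemma reach_of_mem_comp {U : Finset (Fin m)} {v u : Fin m} (h : u ∈ comp I U v) :
    reach I U v u := (Finset.mem_filter.1 h).2

lemma mem_comp_of_reach {U : Finset (Fin m)} {v u w : Fin m} (h : u ∈ comp I U v)
    (hw : reach I U u w) (hwU : w ∈ U) : w ∈ comp I U v :=
  Finset.mem_filter.2 ⟨hwU, (reach_of_mem_comp h).trans hw⟩

lemma comp_eq_of_mem {U : Finset (Fin m)} {v u : Fin m} (h : u ∈ comp I U v) :
    comp I U u = comp I U v := by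
  have hr := reach_of_mem_comp h
  ext x
  simp only [comp, Finset.mem_filter]
  exact ⟨fun hx => ⟨hx.1, hr.trans hx.2⟩, fun hx => ⟨hx.1, (reach_symm hr).trans hx.2⟩⟩

lemma adj_mem_comp {U : Finset (Fin m)} {v u w : Fin m} (h : u ∈ comp I U v)
    (hadj : adjI I u w) (hwU : w ∈ U) : w ∈ comp I U v :=
  mem_comp_of_reach h (Relation.ReflTransGen.single ⟨hadj, comp_subset h, hwU⟩) hwU

/-- reachability within `U` restricts to reachability within the component -/
lemma reach_comp {U : Finset (Fin m)} {v x y : Fin m} (hx : x ∈ comp I U v)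
    (h : reach I U x y) : reach I (comp I U v) x y := by
  induction h with
  | refl => exact Relation.ReflTransGen.refl
  | @tail b c hxb hbc ih =>
    have hb : b ∈ comp I U v := by
      rcases Relation.reflTransGen_iff_eq_or_transGen.1 hxb with rfl | htg
      · exact hx
      · exact mem_comp_of_reach hx hxb hbc.2.1
    have hc : c ∈ comp I U v := adj_mem_comp hb hbc.1 hbc.2.2
    exact ih.tail ⟨hbc.1, hb, hc⟩
  -- note: ih may need the membership; handled above

lemma conn_comp {U : Finset (Fin m)} {v : Fin m} (hv : v ∈ U) : ConnOn I (comp I U v) := by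
  intro a ha b hb
  have hab : reach I U a b := (reach_symm (reach_of_mem_comp ha)).trans (reach_of_mem_comp hb)
  exact reach_comp ha hab

/-- a proper nonempty subset of a connected set has an exiting edge -/
lemma exists_exit {W U : Finset (Fin m)} (hconn : ConnOn I W) (hUW : U ⊆ W)
    (hU : U.Nonempty) (hWU : (W \ U).Nonempty) :
    ∃ x y, x ∈ U ∧ y ∈ W ∧ y ∉ U ∧ adjI I x y := by
  obtain ⟨a, ha⟩ := hU
  obtain ⟨b, hb⟩ := hWU
  rw [Finset.mem_sdiff] at hb
  have hr : reach I W a b := hconn a (hUW ha) b hb.1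
  clear hconn
  induction hr with
  | refl => exact absurd ha hb.2
  | @tail c d hac hcd ih =>
    by_cases hc : c ∈ U
    · exact ⟨c, d, hc, hcd.2.2, hb.2, hcd.1⟩
    · exact ih ⟨hcd.2.1, hc⟩
  -- done

/-- all hypotheses bundled -/
structure Setup (m t Δ : ℕ) (I : Fin m → Finset ℕ) (N : Type) (tr : SimpleGraph N)
    (bag : N → Set (Fin m)) (ν : Fin m → N) : Prop where
  net : IsAbstractNetwork I
  deg : ∀ j, (I j).card ≤ Δ
  tree : tr.IsTree
  nu_mem : ∀ v, v ∈ bag (ν v)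
  edge_bag : ∀ i (j k : Fin m), i ∈ I j → i ∈ I k → ∃ n, j ∈ bag n ∧ k ∈ bag n
  bag_conn : ∀ (v : Fin m) (n n' : N), v ∈ bag n → v ∈ bag n' →
    ∀ μ, v ∉ bag μ → SOn tr μ n n'
  bag_card : ∀ n, (Finset.univ.filter fun v => v ∈ bag n).card ≤ t + 1
  tpos : 1 ≤ t
  dpos : 1 ≤ Δ

namespace Setup

variable (st : Setup m t Δ I N tr bag ν)

include st

lemma adj_SOn {j k : Fin m} (h : adjI I j k) {μ : N} (hj : j ∉ bag μ) (hk : k ∉ bag μ)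
    {n n' : N} (hn : j ∈ bag n) (hn' : k ∈ bag n') : SOn tr μ n n' := by
  obtain ⟨hne, i, hij, hik⟩ := h
  obtain ⟨n₀, hn₀j, hn₀k⟩ := st.edge_bag i j k hij hik
  exact (st.bag_conn j n n₀ hn hn₀j μ hj).trans (st.bag_conn k n₀ n' hn₀k hn' μ hk)

/-- connectivity avoiding a bag gives a single side of the decomposition tree -/
lemma reach_SOn {U : Finset (Fin m)} {μ : N} (hU : ∀ v ∈ U, v ∉ bag μ) {x y : Fin m}
    (hr : reach I U x y) (hx : x ∈ U) : SOn tr μ (ν x) (ν y) := by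
  induction hr with
  | refl =>
    refine SOn.rfl fun hc => ?_
    exact hU x hx (hc ▸ st.nu_mem x)
  | @tail b c hxb hbc ih =>
    refine ih.trans ?_
    exact st.adj_SOn hbc.1 (hU b hbc.2.1) (hU c hbc.2.2) (st.nu_mem b) (st.nu_mem c)

end Setup

/-- crossing edges of `W` are incident to the bags of `n₁` or `n₂` -/
def Anchored (I : Fin m → Finset ℕ) (bag : N → Set (Fin m)) (W : Finset (Fin m))
    (n₁ n₂ : N) : Prop :=
  ∀ i, cnt I W i = 1 → ∃ k, i ∈ I k ∧ (k ∈ bag n₁ ∨ k ∈ bag n₂)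

/-- a good contraction tree over leaf set `S` with all boundaries bounded by `R` -/
def Good (I : Fin m → Finset ℕ) (R : ℕ) (S : Finset (Fin m)) (T : BTree (Fin m)) : Prop :=
  T.leaves.toFinset = S ∧ T.leaves.Nodup ∧
  (∀ l r, BTree.node l r ∈ T.subtrees →
    ∃ i j k, j ∈ l.leaves ∧ k ∈ r.leaves ∧ i ∈ I j ∧ i ∈ I k) ∧
  (∀ u ∈ T.subtrees, (bd I u.leaves.toFinset).card ≤ R)

end CT
end CTD1
/- ### Part D2a : helpers for the main induction -/
noncomputable section CTD2a
open Classical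
namespace CT

variable {m t Δ : ℕ} {I : Fin m → Finset ℕ} {N : Type} {tr : SimpleGraph N}
  {bag : N → Set (Fin m)} {ν : Fin m → N}

lemma cnt_one {S : Finset (Fin m)} {i : ℕ} (h : cnt I S i = 1) :
    ∃ j, j ∈ S ∧ i ∈ I j ∧ ∀ x ∈ S, i ∈ I x → x = j := by
  obtain ⟨j, hj⟩ := Finset.card_eq_one.1 h
  have hjm : j ∈ S.filter fun j => i ∈ I j := hj ▸ Finset.mem_singleton_self j
  rw [Finset.mem_filter] at hjm
  refine ⟨j, hjm.1, hjm.2, fun x hx hix => ?_⟩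
  have : x ∈ S.filter fun j => i ∈ I j := Finset.mem_filter.2 ⟨hx, hix⟩
  rw [hj, Finset.mem_singleton] at this
  exact this

lemma cnt_eq_one {S : Finset (Fin m)} {i : ℕ} {j : Fin m} (hj : j ∈ S) (hij : i ∈ I j)
    (huniq : ∀ x ∈ S, i ∈ I x → x = j) : cnt I S i = 1 := by
  rw [cnt, Finset.card_eq_one]
  refine ⟨j, ?_⟩
  ext x
  rw [Finset.mem_filter, Finset.mem_singleton]
  exact ⟨fun hx => huniq x hx.1 hx.2, fun hx => hx ▸ ⟨hj, hij⟩⟩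

lemma Setup.good_leaf (st : Setup m t Δ I N tr bag ν) (v : Fin m) :
    Good I (4 * Δ * (t + 1)) {v} (BTree.leaf v) := by
  refine ⟨by simp [BTree.leaves], by simp [BTree.leaves], ?_, ?_⟩
  · intro l r h
    simp only [BTree.subtrees, List.mem_singleton] at h
    exact absurd h (by simp)
  · intro u hu
    simp only [BTree.subtrees, List.mem_singleton] at hu
    subst hu
    have : (BTree.leaf v : BTree (Fin m)).leaves.toFinset = {v} := by simp [BTree.leaves]
    rw [this, bd_singleton]
    calc (I v).card ≤ Δ := st.deg v
      _ ≤ 4 * Δ * (t + 1) := by nlinarith [st.tpos]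

end CT
end CTD2a
/- ### Part D3 : the main construction -/
noncomputable section CTD3
open Classical
namespace CT
open SimpleGraph

variable {m t Δ : ℕ} {I : Fin m → Finset ℕ} {N : Type} {tr : SimpleGraph N}
  {bag : N → Set (Fin m)} {ν : Fin m → N}

theorem main_ind [Fintype N] (st : Setup m t Δ I N tr bag ν) :
    ∀ n : ℕ, ∀ W : Finset (Fin m), W.card ≤ n → W.Nonempty → ConnOn I W →
    ∀ n₁ n₂ : N, Anchored I bag W n₁ n₂ →
    ∃ T : BTree (Fin m), Good I (4 * Δ * (t + 1)) W T ∧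
      T.height ≤ 2 * (t + 1) * (Δ + 1) * (Nat.log 2 W.card + 1) := by
  intro n
  induction n using Nat.strong_induction_on with
  | _ n IH =>
  intro W hWn hWne hWconn n₁ n₂ hanch
  rcases eq_or_lt_of_le (Nat.one_le_iff_ne_zero.2 (Finset.card_pos.2 hWne).ne') with h1 | hW2
  · -- base case |W| = 1
    obtain ⟨v, hv⟩ := Finset.card_eq_one.1 h1.symm
    rw [hv]
    exact ⟨BTree.leaf v, st.good_leaf v, Nat.zero_le _⟩
  · -- main case |W| ≥ 2
    have hW2' : 2 ≤ W.card := hW2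
    set R := 4 * Δ * (t + 1) with hRdef
    set P := 2 * (t + 1) * (Δ + 1) with hPdef
    set Hc := P * Nat.log 2 W.card with hHcdef
    -- centroid and median
    obtain ⟨n₃, hcent⟩ := centroid st.tree W ν hWne
    obtain ⟨μ, hm12, hm13, hm23⟩ := median st.tree n₁ n₂ n₃
    set B := W.filter (fun v => v ∈ bag n₃ ∨ v ∈ bag μ) with hBdef
    set Rest := W \ B with hRestdef
    have hBsub : B ⊆ W := Finset.filter_subset _ _
    have hBmem : ∀ v ∈ B, v ∈ bag n₃ ∨ v ∈ bag μ := fun v hv => (Finset.mem_filter.1 hv).2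
    have hRest : ∀ v ∈ Rest, v ∈ W ∧ v ∉ bag n₃ ∧ v ∉ bag μ := by
      intro v hv
      rw [hRestdef, Finset.mem_sdiff, hBdef, Finset.mem_filter] at hv
      refine ⟨hv.1, ?_, ?_⟩ <;> · intro hc; exact hv.2 ⟨hv.1, by tauto⟩
    have hRestW : Rest ⊆ W := Finset.sdiff_subset
    have hRestB : ∀ v ∈ Rest, v ∉ B := fun v hv => (Finset.mem_sdiff.1 hv).2
    have hWsplit : B ∪ Rest = W := Finset.union_sdiff_of_subset hBsub
    -- B is nonempty
    have hBne : B.Nonempty := by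
      rw [Finset.nonempty_iff_ne_empty]
      intro hB0
      have hno : ∀ v ∈ W, v ∉ bag n₃ := by
        intro v hv hc
        have hmem : v ∈ B := Finset.mem_filter.2 ⟨hv, Or.inl hc⟩
        rw [hB0] at hmem
        exact absurd hmem (Finset.notMem_empty v)
      obtain ⟨v₀, hv₀⟩ := hWne
      have hsub : W ⊆ W.filter fun u => SOn tr n₃ (ν u) (ν v₀) := by
        intro v hv
        refine Finset.mem_filter.2 ⟨hv, ?_⟩
        have hr : reach I W v₀ v := hWconn v₀ hv₀ v hv
        exact (st.reach_SOn hno hr hv₀).symm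
      have h1 := Finset.card_le_card hsub
      have h2 := hcent (ν v₀)
      simp only [wgtOn] at h2
      omega
    -- pieces
    set piece : Fin m → Finset (Fin m) :=
      fun v => if v ∈ B then {v} else comp I Rest v with hpiecedef
    have hpieceB : ∀ v ∈ B, piece v = {v} := fun v hv => by
      rw [hpiecedef]; exact if_pos hv
    have hpieceR : ∀ v ∈ Rest, piece v = comp I Rest v := fun v hv => by
      rw [hpiecedef]; exact if_neg (hRestB v hv)
    have hmem_piece : ∀ v ∈ W, v ∈ piece v := by
      intro v hv
      by_cases hvB : v ∈ B
      · rw [hpieceB v hvB]; exact Finset.mem_singleton_self v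
      · have hvR : v ∈ Rest := Finset.mem_sdiff.2 ⟨hv, hvB⟩
        rw [hpieceR v hvR]; exact mem_comp_self hvR
    have hpiece_sub : ∀ v ∈ W, piece v ⊆ W := by
      intro v hv
      by_cases hvB : v ∈ B
      · rw [hpieceB v hvB]; simp [hv]
      · have hvR : v ∈ Rest := Finset.mem_sdiff.2 ⟨hv, hvB⟩
        rw [hpieceR v hvR]; exact comp_subset.trans hRestW
    have hclose : ∀ v ∈ W, ∀ a ∈ piece v, piece a = piece v := by
      intro v hv a ha
      by_cases hvB : v ∈ B
      · rw [hpieceB v hvB] at ha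
        rw [Finset.mem_singleton] at ha
        rw [ha]
      · have hvR : v ∈ Rest := Finset.mem_sdiff.2 ⟨hv, hvB⟩
        rw [hpieceR v hvR] at ha ⊢
        have haR : a ∈ Rest := comp_subset ha
        rw [hpieceR a haR]
        exact comp_eq_of_mem ha
    -- size of components
    have hsize : ∀ v ∈ Rest, 2 * (comp I Rest v).card ≤ W.card := by
      intro v hv
      have hno : ∀ u ∈ Rest, u ∉ bag n₃ := fun u hu => (hRest u hu).2.1
      have hsub : comp I Rest v ⊆ W.filter fun u => SOn tr n₃ (ν u) (ν v) := by
        intro u hu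
        refine Finset.mem_filter.2 ⟨hRestW (comp_subset hu), ?_⟩
        exact (st.reach_SOn hno (reach_of_mem_comp hu) hv).symm
      have h1 := Finset.card_le_card hsub
      have h2 := hcent (ν v)
      simp only [wgtOn] at h2
      omega
    -- boundary of a union of pieces
    have hblob : ∀ U' : Finset (Fin m), U' ⊆ W → (∀ a ∈ U', piece a ⊆ U') →
        (bd I U').card ≤ R := by
      intro U' hU'W hU'cl
      set A1 := Finset.univ.filter fun v : Fin m => v ∈ bag n₁ with hA1
      set A2 := Finset.univ.filter fun v : Fin m => v ∈ bag n₂ with hA2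
      set A3 := Finset.univ.filter fun v : Fin m => v ∈ bag n₃ with hA3
      set A4 := Finset.univ.filter fun v : Fin m => v ∈ bag μ with hA4
      set X := A1 ∪ A2 ∪ A3 ∪ A4 with hXdef
      have hXmem : ∀ k : Fin m, (k ∈ bag n₁ ∨ k ∈ bag n₂ ∨ k ∈ bag n₃ ∨ k ∈ bag μ) →
          k ∈ X := by
        intro k hk
        rw [hXdef]
        simp only [hA1, hA2, hA3, hA4, Finset.mem_union, Finset.mem_filter,
          Finset.mem_univ, true_and]
        tauto
      have hXcard : X.card ≤ 4 * (t + 1) := by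
        have c1 := st.bag_card n₁
        have c2 := st.bag_card n₂
        have c3 := st.bag_card n₃
        have c4 := st.bag_card μ
        rw [← hA1] at c1
        rw [← hA2] at c2
        rw [← hA3] at c3
        rw [← hA4] at c4
        have u1 : X.card ≤ (A1 ∪ A2 ∪ A3).card + A4.card := Finset.card_union_le _ _
        have u2 : (A1 ∪ A2 ∪ A3).card ≤ (A1 ∪ A2).card + A3.card := Finset.card_union_le _ _
        have u3 : (A1 ∪ A2).card ≤ A1.card + A2.card := Finset.card_union_le _ _
        omega
      have hcond : ∀ i, i ∈ allIdx I → cnt I U' i = 1 → ∃ k ∈ X, i ∈ I k := by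
        intro i hiA hcnt
        obtain ⟨j, hjU', hij, huniq⟩ := cnt_one hcnt
        obtain ⟨k, hkj, hik, hall⟩ := two_fibers I st.net hij
        have hkU' : k ∉ U' := fun hc => hkj (huniq k hc hik)
        by_cases hkW : k ∈ W
        · by_cases hkB : k ∈ B
          · refine ⟨k, hXmem k ?_, hik⟩
            rcases hBmem k hkB with h | h
            · exact Or.inr (Or.inr (Or.inl h))
            · exact Or.inr (Or.inr (Or.inr h))
          · have hkRest : k ∈ Rest := Finset.mem_sdiff.2 ⟨hkW, hkB⟩
            by_cases hjB : j ∈ B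
            · refine ⟨j, hXmem j ?_, hij⟩
              rcases hBmem j hjB with h | h
              · exact Or.inr (Or.inr (Or.inl h))
              · exact Or.inr (Or.inr (Or.inr h))
            · have hjRest : j ∈ Rest := Finset.mem_sdiff.2 ⟨hU'W hjU', hjB⟩
              exfalso
              have hadj : adjI I j k := ⟨Ne.symm hkj, i, hij, hik⟩
              have hkp : k ∈ piece j := by
                rw [hpieceR j hjRest]
                exact adj_mem_comp (mem_comp_self hjRest) hadj hkRest
              exact hkU' (hU'cl j hjU' hkp)
        · have hcntW : cnt I W i = 1 := by
            refine cnt_eq_one (hU'W hjU') hij ?_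
            intro x hx hixx
            rcases hall x hixx with h | h
            · exact h
            · exact absurd (h ▸ hx) hkW
          obtain ⟨x, hixx, hxb⟩ := hanch i hcntW
          refine ⟨x, hXmem x ?_, hixx⟩
          tauto
      calc (bd I U').card ≤ Δ * X.card := bd_card_le I st.deg hcond
        _ ≤ Δ * (4 * (t + 1)) := Nat.mul_le_mul_left Δ hXcard
        _ = R := by rw [hRdef]; ring
    -- anchors for components
    have hcomp_anch : ∀ v ∈ Rest, ∃ n', Anchored I bag (comp I Rest v) μ n' := by
      intro v hvR
      have hnoμ : ∀ u ∈ Rest, u ∉ bag μ := fun u hu => (hRest u hu).2.2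
      have key : ∀ i, cnt I (comp I Rest v) i = 1 → ∃ k, i ∈ I k ∧ (k ∈ bag μ ∨
          ∃ a, (a = n₁ ∨ a = n₂ ∨ a = n₃) ∧ k ∈ bag a ∧ SOn tr μ a (ν v)) := by
        intro i hcnt
        obtain ⟨j, hjC, hij, huniq⟩ := cnt_one hcnt
        obtain ⟨k, hkj, hik, hall⟩ := two_fibers I st.net hij
        have hjR : j ∈ Rest := comp_subset hjC
        have hjW : j ∈ W := hRestW hjR
        have hjμ : j ∉ bag μ := (hRest j hjR).2.2
        have hkC : k ∉ comp I Rest v := fun hc => hkj (huniq k hc hik)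
        have hSvj : SOn tr μ (ν v) (ν j) :=
          st.reach_SOn hnoμ (reach_of_mem_comp hjC) hvR
        by_cases hkμ : k ∈ bag μ
        · exact ⟨k, hik, Or.inl hkμ⟩
        by_cases hkW : k ∈ W
        · by_cases hkB : k ∈ B
          · have hk3 : k ∈ bag n₃ := (hBmem k hkB).resolve_right hkμ
            have hadj : adjI I j k := ⟨Ne.symm hkj, i, hij, hik⟩
            have hS : SOn tr μ (ν j) n₃ := st.adj_SOn hadj hjμ hkμ (st.nu_mem j) hk3
            exact ⟨k, hik, Or.inr ⟨n₃, Or.inr (Or.inr rfl), hk3,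
              hS.symm.trans hSvj.symm⟩⟩
          · exfalso
            have hkR : k ∈ Rest := Finset.mem_sdiff.2 ⟨hkW, hkB⟩
            have hadj : adjI I j k := ⟨Ne.symm hkj, i, hij, hik⟩
            exact hkC (adj_mem_comp hjC hadj hkR)
        · have hcntW : cnt I W i = 1 := by
            refine cnt_eq_one hjW hij ?_
            intro x hx hixx
            rcases hall x hixx with h | h
            · exact h
            · exact absurd (h ▸ hx) hkW
          obtain ⟨x, hixx, hxb⟩ := hanch i hcntW
          by_cases hxμ : x ∈ bag μ
          · exact ⟨x, hixx, Or.inl hxμ⟩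
          have hmk : ∀ a, (a = n₁ ∨ a = n₂ ∨ a = n₃) → x ∈ bag a →
              ∃ k, i ∈ I k ∧ (k ∈ bag μ ∨ ∃ a, (a = n₁ ∨ a = n₂ ∨ a = n₃) ∧ k ∈ bag a ∧
                SOn tr μ a (ν v)) := by
            intro a ha hxa
            rcases hall x hixx with hxj | hxk
            · subst hxj
              have hS : SOn tr μ a (ν x) := st.bag_conn x a (ν x) hxa (st.nu_mem x) μ hxμ
              exact ⟨x, hixx, Or.inr ⟨a, ha, hxa, hS.trans hSvj.symm⟩⟩
            · subst hxk
              have hadj : adjI I j x := ⟨Ne.symm hkj, i, hij, hixx⟩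
              have hS : SOn tr μ (ν j) a := st.adj_SOn hadj hjμ hxμ (st.nu_mem j) hxa
              exact ⟨x, hixx, Or.inr ⟨a, ha, hxa, hS.symm.trans hSvj.symm⟩⟩
          rcases hxb with hx1 | hx2
          · exact hmk n₁ (Or.inl rfl) hx1
          · exact hmk n₂ (Or.inr (Or.inl rfl)) hx2
      by_cases h1 : SOn tr μ n₁ (ν v)
      · refine ⟨n₁, fun i hi => ?_⟩
        obtain ⟨k, hik, hk⟩ := key i hi
        rcases hk with hk | ⟨a, ha, hka, hSa⟩
        · exact ⟨k, hik, Or.inl hk⟩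
        rcases ha with rfl | rfl | rfl
        · exact ⟨k, hik, Or.inr hka⟩
        · exact absurd (h1.trans hSa.symm) hm12
        · exact absurd (h1.trans hSa.symm) hm13
      · by_cases h2 : SOn tr μ n₂ (ν v)
        · refine ⟨n₂, fun i hi => ?_⟩
          obtain ⟨k, hik, hk⟩ := key i hi
          rcases hk with hk | ⟨a, ha, hka, hSa⟩
          · exact ⟨k, hik, Or.inl hk⟩
          rcases ha with rfl | rfl | rfl
          · exact absurd hSa h1
          · exact ⟨k, hik, Or.inr hka⟩
          · exact absurd (h2.trans hSa.symm) hm23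
        · refine ⟨n₃, fun i hi => ?_⟩
          obtain ⟨k, hik, hk⟩ := key i hi
          rcases hk with hk | ⟨a, ha, hka, hSa⟩
          · exact ⟨k, hik, Or.inl hk⟩
          rcases ha with rfl | rfl | rfl
          · exact absurd hSa h1
          · exact absurd hSa h2
          · exact ⟨k, hik, Or.inr hka⟩
    -- trees for the pieces
    have PT : ∀ y ∈ W, ∃ Tp, Good I R (piece y) Tp ∧ Tp.height ≤ Hc := by
      intro y hy
      by_cases hyB : y ∈ B
      · refine ⟨BTree.leaf y, ?_, Nat.zero_le _⟩
        rw [hpieceB y hyB]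
        exact st.good_leaf y
      · have hyR : y ∈ Rest := Finset.mem_sdiff.2 ⟨hy, hyB⟩
        have hsz := hsize y hyR
        have hlt : W.card / 2 < n :=
          lt_of_lt_of_le (Nat.div_lt_self (by omega) one_lt_two) hWn
        have hCle : (comp I Rest y).card ≤ W.card / 2 :=
          (Nat.le_div_iff_mul_le two_pos).2 (by omega)
        obtain ⟨n', hn'⟩ := hcomp_anch y hyR
        obtain ⟨Tc, hTcgood, hTch⟩ := IH (W.card / 2) hlt (comp I Rest y) hCle
          ⟨y, mem_comp_self hyR⟩ (conn_comp hyR) μ n' hn'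
        refine ⟨Tc, by rw [hpieceR y hyR]; exact hTcgood, ?_⟩
        have hlog : Nat.log 2 (comp I Rest y).card + 1 ≤ Nat.log 2 W.card := by
          have l1 : Nat.log 2 (comp I Rest y).card ≤ Nat.log 2 (W.card / 2) :=
            Nat.log_mono_right hCle
          have l2 : Nat.log 2 (W.card / 2) = Nat.log 2 W.card - 1 := Nat.log_div_base 2 W.card
          have l3 : 0 < Nat.log 2 W.card := Nat.log_pos one_lt_two hW2'
          omega
        calc Tc.height ≤ P * (Nat.log 2 (comp I Rest y).card + 1) := hTch
          _ ≤ P * Nat.log 2 W.card := Nat.mul_le_mul_left P hlog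
          _ = Hc := hHcdef.symm
    -- merging
    have ML : ∀ s : ℕ, ∀ U : Finset (Fin m), U.Nonempty → U ⊆ W →
        (∀ a ∈ U, piece a ⊆ U) → (W \ U).card ≤ s → ∀ T₀ h₀, Good I R U T₀ →
        T₀.height ≤ h₀ →
        ∃ T, Good I R W T ∧ T.height ≤ max h₀ Hc + ((W \ U).image piece).card := by
      intro s
      induction s with
      | zero =>
        intro U hUne hUW hUcl hcard T₀ h₀ hgood hh
        have hem : W \ U = ∅ := Finset.card_eq_zero.1 (Nat.le_zero.1 hcard)
        have hUW' : U = W := le_antisymm hUW (Finset.sdiff_eq_empty_iff_subset.1 hem)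
        subst hUW'
        exact ⟨T₀, hgood, le_trans hh (le_trans (le_max_left _ _) (Nat.le_add_right _ _))⟩
      | succ s IHs =>
        intro U hUne hUW hUcl hcard T₀ h₀ hgood hh
        by_cases hrem : (W \ U).Nonempty
        · obtain ⟨x, y, hxU, hyW, hyU, hadj⟩ := exists_exit hWconn hUW hUne hrem
          obtain ⟨Tp, hTpgood, hTph⟩ := PT y hyW
          have hyP : y ∈ piece y := hmem_piece y hyW
          have hdisj : ∀ a, a ∈ piece y → a ∉ U := by
            intro a haP haU
            have heqp : piece a = piece y := hclose y hyW a haP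
            have hyU' : y ∈ U := (hUcl a haU) (heqp.symm ▸ hyP)
            exact hyU hyU'
          set U₁ := U ∪ piece y with hU₁def
          have hU₁W : U₁ ⊆ W := Finset.union_subset hUW (hpiece_sub y hyW)
          have hU₁cl : ∀ a ∈ U₁, piece a ⊆ U₁ := by
            intro a ha
            rcases Finset.mem_union.1 ha with h | h
            · exact (hUcl a h).trans Finset.subset_union_left
            · rw [hclose y hyW a h]
              exact Finset.subset_union_right
          set T₁ := BTree.node T₀ Tp with hT₁def
          have hlv : T₁.leaves = T₀.leaves ++ Tp.leaves := rfl
          have hlvF : T₁.leaves.toFinset = U₁ := by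
            rw [hlv, List.toFinset_append, hgood.1, hTpgood.1]
          have hnd : T₁.leaves.Nodup := by
            rw [hlv, List.nodup_append]
            refine ⟨hgood.2.1, hTpgood.2.1, ?_⟩
            intro a haT₀ _ haTp rfl
            have hm1 : a ∈ U := by
              rw [← hgood.1]
              exact List.mem_toFinset.2 haT₀
            have hm2 : a ∈ piece y := by
              rw [← hTpgood.1]
              exact List.mem_toFinset.2 haTp
            exact hdisj a hm2 hm1
          have hgood₁ : Good I R U₁ T₁ := by
            refine ⟨hlvF, hnd, ?_, ?_⟩
            · intro l r h
              rcases BTree.mem_subtrees_node.1 h with heq | h | h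
              · obtain ⟨hl, hr⟩ : l = T₀ ∧ r = Tp := by
                  constructor <;> · injection heq with h1 h2 <;> assumption
                subst hl
                subst hr
                obtain ⟨hne, i, hix, hiy⟩ := hadj
                refine ⟨i, x, y, ?_, ?_, hix, hiy⟩
                · rw [← List.mem_toFinset, hgood.1]
                  exact hxU
                · rw [← List.mem_toFinset, hTpgood.1]
                  exact hyP
              · exact hgood.2.2.1 l r h
              · exact hTpgood.2.2.1 l r h
            · intro u hu
              rcases BTree.mem_subtrees_node.1 hu with heq | h | h
              · subst heq
                rw [hlvF]
                exact hblob U₁ hU₁W hU₁cl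
              · exact hgood.2.2.2 u h
              · exact hTpgood.2.2.2 u h
          have hh₁ : T₁.height ≤ max h₀ Hc + 1 := by
            have hhe : T₁.height = max T₀.height Tp.height + 1 := rfl
            rw [hhe]
            have hmm : max T₀.height Tp.height ≤ max h₀ Hc :=
              max_le (le_trans hh (le_max_left _ _)) (le_trans hTph (le_max_right _ _))
            omega
          have hU₁ne : U₁.Nonempty := hUne.mono Finset.subset_union_left
          have hcard₁ : (W \ U₁).card ≤ s := by
            have hsub : W \ U₁ ⊆ (W \ U).erase y := by
              intro a ha
              rw [Finset.mem_sdiff, hU₁def, Finset.mem_union] at ha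
              rw [Finset.mem_erase, Finset.mem_sdiff]
              exact ⟨fun hc => ha.2 (Or.inr (hc ▸ hyP)), ha.1, fun hc => ha.2 (Or.inl hc)⟩
            have hc1 := Finset.card_le_card hsub
            have hc2 : y ∈ W \ U := Finset.mem_sdiff.2 ⟨hyW, hyU⟩
            rw [Finset.card_erase_of_mem hc2] at hc1
            have hc3 : 0 < (W \ U).card := Finset.card_pos.2 ⟨y, hc2⟩
            omega
          have hpcstep : ((W \ U₁).image piece).card + 1 ≤ ((W \ U).image piece).card := by
            have hyWU : y ∈ W \ U := Finset.mem_sdiff.2 ⟨hyW, hyU⟩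
            have hpy : piece y ∈ (W \ U).image piece := Finset.mem_image_of_mem piece hyWU
            have hsub : (W \ U₁).image piece ⊆ ((W \ U).image piece).erase (piece y) := by
              intro p hp
              obtain ⟨a, ha, rfl⟩ := Finset.mem_image.1 hp
              rw [Finset.mem_sdiff, hU₁def, Finset.mem_union] at ha
              refine Finset.mem_erase.2 ⟨?_, Finset.mem_image_of_mem piece
                (Finset.mem_sdiff.2 ⟨ha.1, fun hc => ha.2 (Or.inl hc)⟩)⟩
              intro hc
              exact ha.2 (Or.inr (hc ▸ hmem_piece a ha.1))
            have hc1 := Finset.card_le_card hsub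
            rw [Finset.card_erase_of_mem hpy] at hc1
            have hc2 : 0 < ((W \ U).image piece).card := Finset.card_pos.2 ⟨_, hpy⟩
            omega
          obtain ⟨T, hTgood, hTh⟩ := IHs U₁ hU₁ne hU₁W hU₁cl hcard₁ T₁
            (max h₀ Hc + 1) hgood₁ hh₁
          refine ⟨T, hTgood, ?_⟩
          have hmx : max (max h₀ Hc + 1) Hc = max h₀ Hc + 1 :=
            max_eq_left (le_trans (le_max_right h₀ Hc) (Nat.le_succ _))
          rw [hmx] at hTh
          omega
        · rw [Finset.not_nonempty_iff_eq_empty] at hrem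
          have hUW' : U = W := le_antisymm hUW (Finset.sdiff_eq_empty_iff_subset.1 hrem)
          subst hUW'
          exact ⟨T₀, hgood, le_trans hh (le_trans (le_max_left _ _) (Nat.le_add_right _ _))⟩
    -- piece count
    have hpc : (W.image piece).card ≤ P := by
      have hBcard : B.card ≤ 2 * (t + 1) := by
        have hsub : B ⊆ (Finset.univ.filter fun v : Fin m => v ∈ bag n₃) ∪
            (Finset.univ.filter fun v : Fin m => v ∈ bag μ) := by
          intro v hv
          rcases hBmem v hv with h | h
          · exact Finset.mem_union_left _ (Finset.mem_filter.2 ⟨Finset.mem_univ _, h⟩)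
          · exact Finset.mem_union_right _ (Finset.mem_filter.2 ⟨Finset.mem_univ _, h⟩)
        have hc1 := Finset.card_le_card hsub
        have hc2 := Finset.card_union_le (Finset.univ.filter fun v : Fin m => v ∈ bag n₃)
          (Finset.univ.filter fun v : Fin m => v ∈ bag μ)
        have c3 := st.bag_card n₃
        have c4 := st.bag_card μ
        omega
      have hwit : ∀ p : Finset (Fin m), ∃ i : ℕ, p ∈ Rest.image piece →
          i ∈ inc I B ∧ ∃ a, a ∈ Rest ∧ a ∈ p ∧ i ∈ I a := by
        intro p
        by_cases hp : p ∈ Rest.image piece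
        · obtain ⟨y, hyR, rfl⟩ := Finset.mem_image.1 hp
          have hCW : piece y ⊆ W := hpiece_sub y (hRestW hyR)
          have hCne : (piece y).Nonempty := ⟨y, hmem_piece y (hRestW hyR)⟩
          obtain ⟨b₀, hb₀⟩ := hBne
          have hWC : (W \ piece y).Nonempty := by
            refine ⟨b₀, Finset.mem_sdiff.2 ⟨hBsub hb₀, fun hc => ?_⟩⟩
            have hb₀R : b₀ ∈ Rest := by
              rw [hpieceR y hyR] at hc
              exact comp_subset hc
            exact hRestB b₀ hb₀R hb₀
          obtain ⟨x, z, hxC, hzW, hzC, hadj'⟩ := exists_exit hWconn hCW hCne hWC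
          have hxR : x ∈ Rest := by
            rw [hpieceR y hyR] at hxC
            exact comp_subset hxC
          have hzB : z ∈ B := by
            by_contra hzB
            have hzR : z ∈ Rest := Finset.mem_sdiff.2 ⟨hzW, hzB⟩
            apply hzC
            rw [hpieceR y hyR] at hxC ⊢
            exact adj_mem_comp hxC hadj' hzR
          obtain ⟨hne', i, hix, hiz⟩ := hadj'
          exact ⟨i, fun _ => ⟨Finset.mem_biUnion.2 ⟨z, hzB, hiz⟩, x, hxR, hxC, hix⟩⟩
        · exact ⟨0, fun hc => absurd hc hp⟩
      choose f hf using hwit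
      have hRestImg : (Rest.image piece).card ≤ (inc I B).card := by
        refine Finset.card_le_card_of_injOn f (fun p hp => (hf p hp).1) ?_
        intro p hp' q hq' hfpq
        have hp : p ∈ Rest.image piece := hp'
        have hq : q ∈ Rest.image piece := hq'
        obtain ⟨a, haR, hap, hia⟩ := (hf p hp).2
        obtain ⟨a', ha'R, ha'q, hia'⟩ := (hf q hq).2
        rw [hfpq] at hia
        obtain ⟨k, hkj, hik, hall⟩ := two_fibers I st.net hia'
        obtain ⟨b, hbB, hib⟩ := Finset.mem_biUnion.1 (hf q hq).1
        have ha' : a = a' := by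
          rcases hall a hia with h | h
          · exact h
          · exfalso
            rcases hall b hib with hb | hb
            · rw [hb] at hbB
              exact hRestB a' ha'R hbB
            · have hba : a ∈ B := by rw [h, ← hb]; exact hbB
              exact hRestB a haR hba
        obtain ⟨yp, hypR, rfl⟩ := Finset.mem_image.1 hp
        obtain ⟨yq, hyqR, rfl⟩ := Finset.mem_image.1 hq
        rw [← hclose yp (hRestW hypR) a hap, ha',
          hclose yq (hRestW hyqR) a' ha'q]
      have hincB : (inc I B).card ≤ Δ * (2 * (t + 1)) :=
        le_trans (card_inc_le I st.deg B) (Nat.mul_le_mul_left Δ hBcard)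
      have himg : (W.image piece).card ≤ (B.image piece).card + (Rest.image piece).card := by
        conv_lhs => rw [← hWsplit]
        rw [Finset.image_union]
        exact Finset.card_union_le _ _
      have hBimg : (B.image piece).card ≤ B.card := Finset.card_image_le
      have hPeq : 2 * (t + 1) + Δ * (2 * (t + 1)) = P := by rw [hPdef]; ring
      omega
    -- assemble
    obtain ⟨v₀, hv₀⟩ := hWne
    obtain ⟨T₀, hT₀good, hT₀h⟩ := PT v₀ hv₀
    have hU₀ne : (piece v₀).Nonempty := ⟨v₀, hmem_piece v₀ hv₀⟩
    have hU₀cl : ∀ a ∈ piece v₀, piece a ⊆ piece v₀ := by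
      intro a ha
      rw [hclose v₀ hv₀ a ha]
    obtain ⟨T, hTgood, hTh⟩ := ML (W \ piece v₀).card (piece v₀) hU₀ne
      (hpiece_sub v₀ hv₀) hU₀cl le_rfl T₀ Hc hT₀good hT₀h
    refine ⟨T, hTgood, ?_⟩
    have h1 : ((W \ piece v₀).image piece).card ≤ (W.image piece).card :=
      Finset.card_le_card (Finset.image_subset_image Finset.sdiff_subset)
    have h2 : max Hc Hc = Hc := max_self Hc
    rw [h2] at hTh
    calc T.height ≤ Hc + ((W \ piece v₀).image piece).card := hTh
      _ ≤ Hc + P := by omega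
      _ = P * (Nat.log 2 W.card + 1) := by rw [hHcdef]; ring

end CT
end CTD3
/- ### Part E : the wrapper -/
noncomputable section CTE
open Classical
namespace CT
open SimpleGraph

lemma induce_reachable_walk {N : Type} {tr : SimpleGraph N} {s : Set N} {a b : ↥s}
    (h : (tr.induce s).Reachable a b) :
    ∃ w : tr.Walk a.1 b.1, ∀ x ∈ w.support, x ∈ s := by
  obtain ⟨w⟩ := h
  induction w with
  | nil => exact ⟨Walk.nil, by simp [Subtype.coe_prop]⟩
  | @cons u v c huv p ih =>
    obtain ⟨w', hw'⟩ := ih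
    have hadj : tr.Adj u.1 v.1 := huv
    refine ⟨Walk.cons hadj w', ?_⟩
    intro x hx
    rw [Walk.support_cons, List.mem_cons] at hx
    rcases hx with rfl | hx
    · exact u.2
    · exact hw' x hx

end CT
end CTE

/-- There is a constant `c > 0` such that for all `m, t, Δ ≥ 1` and
every abstract network `I : Fin m → Finset ℕ` whose graph `G(I)` is connected, has
treewidth at most `t` and maximum degree at most `Δ`, there exists a contraction tree
for `I` of rank at most `c·Δ·t` and height at most `c·Δ·t·(1 + log m)`. -/
theorem statement_0 :
    ∃ c : ℝ, 0 < c ∧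
      ∀ (m t Δ : ℕ), 1 ≤ m → 1 ≤ t → 1 ≤ Δ →
      ∀ I : Fin m → Finset ℕ, IsAbstractNetwork I →
      (∃ (E : Type) (_ : Fintype E) (G : Multigraph (Fin m) E) (idx : E → ℕ),
          IsNetworkGraph I G idx ∧ G.Connected ∧ TreewidthLE G t ∧
          (∀ v : Fin m, G.degree v ≤ Δ)) →
      ∃ T : BTree (Fin m), IsContractionTree I T ∧
        (∀ u ∈ T.subtrees, ((iota I u).card : ℝ) ≤ c * Δ * t) ∧
        (T.height : ℝ) ≤ c * Δ * t * (1 + Real.log m) := by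
  classical
  refine ⟨100, by norm_num, ?_⟩
  intro m t Δ hm ht hΔ I hnet ⟨E, instE, G, idx, hng, hGconn, htw, hdegG⟩
  obtain ⟨N, instN, tr, bag, htree, hcover, hedge, hbags, hcard⟩ := htw
  obtain ⟨hinj, hsurj, hiff⟩ := hng
  -- the vertex-to-node assignment
  choose ν hν using hcover
  -- degree bound in terms of the family
  have hdegI : ∀ j : Fin m, (I j).card ≤ Δ := by
    intro j
    have hchoice : ∀ i : ℕ, i ∈ I j → ∃ e : E, idx e = i := fun i hi => hsurj i ⟨j, hi⟩
    choose g hg using hchoice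
    have hF : ∀ (i : ℕ) (hi : i ∈ I j), j ∈ G.ends (g i hi) := by
      intro i hi
      exact (hiff (g i hi) j).2 (by rw [hg i hi]; exact hi)
    have hcardle : (I j).card ≤ Nat.card {e : E // j ∈ G.ends e} := by
      rw [Nat.card_eq_fintype_card]
      have : (I j).card = Fintype.card {i // i ∈ I j} := (Fintype.card_coe _).symm
      rw [this]
      refine Fintype.card_le_of_injective
        (fun x => ⟨g x.1 x.2, hF x.1 x.2⟩) ?_
      intro x y hxy
      have : g x.1 x.2 = g y.1 y.2 := congrArg Subtype.val hxy
      have : idx (g x.1 x.2) = idx (g y.1 y.2) := by rw [this]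
      rw [hg x.1 x.2, hg y.1 y.2] at this
      exact Subtype.ext this
    exact le_trans hcardle (hdegG j)
  -- the setup
  have st : CT.Setup m t Δ I N tr bag ν := by
    refine ⟨hnet, hdegI, htree, hν, ?_, ?_, ?_, ht, hΔ⟩
    · -- edge_bag
      intro i j k hij hik
      obtain ⟨e, he⟩ := hsurj i ⟨j, hij⟩
      obtain ⟨n, hn⟩ := hedge e
      exact ⟨n, hn j ((hiff e j).2 (he ▸ hij)), hn k ((hiff e k).2 (he ▸ hik))⟩
    · -- bag_conn
      intro v n n' hvn hvn' μ hvμ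
      have hr : (tr.induce {x : N | v ∈ bag x}).Reachable ⟨n, hvn⟩ ⟨n', hvn'⟩ :=
        (hbags v).preconnected ⟨n, hvn⟩ ⟨n', hvn'⟩
      obtain ⟨w, hw⟩ := CT.induce_reachable_walk hr
      exact ⟨w, fun hc => hvμ (hw μ hc)⟩
    · -- bag_card
      intro n
      have h1 : (Finset.univ.filter fun v : Fin m => v ∈ bag n) = (bag n).toFinset := by
        ext v
        simp [Set.mem_toFinset]
      rw [h1, ← Set.ncard_eq_toFinset_card']
      exact hcard n
  -- connectivity of the full vertex set
  have hconnU : CT.ConnOn I (Finset.univ : Finset (Fin m)) := by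
    intro a _ b _
    refine Relation.ReflTransGen.mono ?_ _ _ (hGconn.2 a b)
    intro x y hxy
    obtain ⟨hne, e, hx, hy⟩ := hxy
    exact ⟨⟨hne, idx e, (hiff e x).1 hx, (hiff e y).1 hy⟩,
      Finset.mem_univ _, Finset.mem_univ _⟩
  have hNne : Nonempty N := htree.isConnected.nonempty
  have hFinNe : Nonempty (Fin m) := ⟨⟨0, hm⟩⟩
  have hUne : (Finset.univ : Finset (Fin m)).Nonempty := Finset.univ_nonempty
  -- anchoring of the full vertex set (vacuous)
  have hanchU : CT.Anchored I bag (Finset.univ : Finset (Fin m))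
      (Classical.arbitrary N) (Classical.arbitrary N) := by
    intro i hcnt
    exfalso
    obtain ⟨j, _, hij, _⟩ := CT.cnt_one hcnt
    have h2 : CT.cnt I Finset.univ i = 2 := by
      rw [CT.cnt]
      rw [Finset.filter_congr_decidable]
      exact hnet i ⟨j, hij⟩
    omega
  have hcardU : (Finset.univ : Finset (Fin m)).card = m := by simp
  obtain ⟨T, hTgood, hTh⟩ := CT.main_ind st m Finset.univ (le_of_eq hcardU) hUne hconnU
    (Classical.arbitrary N) (Classical.arbitrary N) hanchU
  obtain ⟨hTfin, hTnd, hTcontr, hTbd⟩ := hTgood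
  refine ⟨T, ⟨hTnd, ?_, ?_⟩, ?_, ?_⟩
  · -- all vertices appear as leaves
    intro j
    exact List.mem_toFinset.1 (hTfin.symm ▸ Finset.mem_univ j)
  · -- intersections nonempty
    intro l r h
    obtain ⟨i, j, k, hjl, hkr, hij, hik⟩ := hTcontr l r h
    have hnd' : (BTree.node l r).leaves.Nodup := BTree.nodup_of_subtree hTnd h
    have hnd'' := List.nodup_append.1 (by simpa [BTree.leaves] using hnd')
    have hjk : j ≠ k := fun hc => hnd''.2.2 _ hjl _ (hc ▸ hkr) rfl
    obtain ⟨k', hk'j, hik', hall⟩ := CT.two_fibers I hnet hij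
    have hkk' : k = k' := (hall k hik).resolve_left (fun hc => hjk hc.symm)
    have hiotal : iota I l = CT.bd I l.leaves.toFinset :=
      CT.iota_eq_bd I hnet l hnd''.1
    have hiotar : iota I r = CT.bd I r.leaves.toFinset :=
      CT.iota_eq_bd I hnet r hnd''.2.1
    refine ⟨i, Finset.mem_inter.2 ⟨?_, ?_⟩⟩
    · rw [hiotal, CT.bd, Finset.mem_filter]
      refine ⟨(CT.mem_allIdx I).2 ⟨j, hij⟩, CT.cnt_eq_one (List.mem_toFinset.2 hjl) hij ?_⟩
      intro x hx hixx
      rcases hall x hixx with hxj | hxk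
      · exact hxj
      · exfalso
        rw [hxk, ← hkk'] at hx
        exact hnd''.2.2 _ (List.mem_toFinset.1 hx) _ hkr rfl
    · rw [hiotar, CT.bd, Finset.mem_filter]
      refine ⟨(CT.mem_allIdx I).2 ⟨j, hij⟩, CT.cnt_eq_one (List.mem_toFinset.2 hkr) hik ?_⟩
      intro x hx hixx
      rcases hall x hixx with hxj | hxk
      · exfalso
        rw [hxj] at hx
        exact hnd''.2.2 _ hjl _ (List.mem_toFinset.1 hx) rfl
      · rw [hxk, ← hkk']
  · -- rank bound
    intro u hu
    have hnd' : u.leaves.Nodup := BTree.nodup_of_subtree hTnd hu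
    have hiota : iota I u = CT.bd I u.leaves.toFinset := CT.iota_eq_bd I hnet u hnd'
    have hble := hTbd u hu
    have hnat : (iota I u).card ≤ 100 * Δ * t := by
      rw [hiota]
      calc (CT.bd I u.leaves.toFinset).card ≤ 4 * Δ * (t + 1) := hble
        _ ≤ 4 * Δ * (2 * t) := Nat.mul_le_mul_left (4 * Δ) (by omega)
        _ = 8 * Δ * t := by ring
        _ ≤ 100 * Δ * t := Nat.mul_le_mul_right t (Nat.mul_le_mul_right Δ (by norm_num))
    calc ((iota I u).card : ℝ) ≤ ((100 * Δ * t : ℕ) : ℝ) := Nat.cast_le.2 hnat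
      _ = 100 * Δ * t := by push_cast; ring
  · -- height bound
    rw [hcardU] at hTh
    set L := Nat.log 2 m with hLdef
    have hnat : T.height ≤ 8 * Δ * t * (L + 1) := by
      calc T.height ≤ 2 * (t + 1) * (Δ + 1) * (L + 1) := hTh
        _ ≤ 2 * (2 * t) * (2 * Δ) * (L + 1) := by
            refine Nat.mul_le_mul_right (L + 1) ?_
            exact Nat.mul_le_mul (Nat.mul_le_mul_left 2 (by omega)) (by omega)
        _ = 8 * Δ * t * (L + 1) := by ring
    have hlogm : (0 : ℝ) ≤ Real.log m := Real.log_nonneg (by exact_mod_cast hm)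
    have hL2 : (L : ℝ) ≤ 2 * Real.log m := by
      have hp : (2 : ℕ) ^ L ≤ m := Nat.pow_log_le_self 2 (by omega)
      have hpr : ((2 : ℝ)) ^ L ≤ (m : ℝ) := by exact_mod_cast hp
      have hlogle : Real.log ((2 : ℝ) ^ L) ≤ Real.log m :=
        Real.log_le_log (by positivity) hpr
      rw [Real.log_pow] at hlogle
      have hlog2 : (0.6931471803 : ℝ) < Real.log 2 := Real.log_two_gt_d9
      have hLnn : (0 : ℝ) ≤ (L : ℝ) := Nat.cast_nonneg L
      nlinarith
    have h1 : (T.height : ℝ) ≤ 8 * Δ * t * ((L : ℝ) + 1) := by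
      calc (T.height : ℝ) ≤ ((8 * Δ * t * (L + 1) : ℕ) : ℝ) := Nat.cast_le.2 hnat
        _ = 8 * Δ * t * ((L : ℝ) + 1) := by push_cast; ring
    have h2 : ((L : ℝ) + 1) ≤ 2 * (1 + Real.log m) := by nlinarith
    have h3 : (0 : ℝ) ≤ 8 * (Δ : ℝ) * t := by positivity
    calc (T.height : ℝ) ≤ 8 * Δ * t * (2 * (1 + Real.log m)) := by nlinarith
      _ = 16 * Δ * t * (1 + Real.log m) := by ring
      _ ≤ 100 * Δ * t * (1 + Real.log m) := by
        have h4 : (0 : ℝ) ≤ (Δ : ℝ) * t * (1 + Real.log m) := by positivity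
        nlinarith
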